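/- sin(4π/13)/sin(2π/13) - sin(6π/13)/sin(3π/13) - sin(2π/13)/sin(π/13) + sin(5π/13)/sin(4π/13) - sin(3π/13)/sin(5π/13) + sin(π/13)/sin(6π/13) = -1. -/

import Mathlib

open Real

private lemma aux_sin2 (a b c d : ℝ) (h1 : c = a + b) (h2 : d = b - a) :
    2 * Real.sin a * Real.cos b = Real.sin c - Real.sin d := by
  subst h1; subst h2; rw [Real.sin_add, Real.sin_sub]; ring

theorem stmt_10 :
    Real.sin (4 * π / 13) / Real.sin (2 * π / 13)
      - Real.sin (6 * π / 13) / Real.sin (3 * π / 13)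
      - Real.sin (2 * π / 13) / Real.sin (π / 13)
      + Real.sin (5 * π / 13) / Real.sin (4 * π / 13)
      - Real.sin (3 * π / 13) / Real.sin (5 * π / 13)
      + Real.sin (π / 13) / Real.sin (6 * π / 13) = -1 := by
  have pi_pos := Real.pi_pos
  have h1 : 0 < Real.sin (π / 13) :=
    Real.sin_pos_of_pos_of_lt_pi (by positivity) (by nlinarith)
  have h2 : 0 < Real.sin (2 * π / 13) :=
    Real.sin_pos_of_pos_of_lt_pi (by positivity) (by nlinarith)
  have h3 : 0 < Real.sin (3 * π / 13) :=
    Real.sin_pos_of_pos_of_lt_pi (by positivity) (by nlinarith)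
  have h4 : 0 < Real.sin (4 * π / 13) :=
    Real.sin_pos_of_pos_of_lt_pi (by positivity) (by nlinarith)
  have h5 : 0 < Real.sin (5 * π / 13) :=
    Real.sin_pos_of_pos_of_lt_pi (by positivity) (by nlinarith)
  have h6 : 0 < Real.sin (6 * π / 13) :=
    Real.sin_pos_of_pos_of_lt_pi (by positivity) (by nlinarith)
  -- double angle identities
  have e1 : Real.sin (4 * π / 13) = 2 * Real.sin (2 * π / 13) * Real.cos (2 * π / 13) := by
    rw [show (4 : ℝ) * π / 13 = 2 * (2 * π / 13) by ring, Real.sin_two_mul]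
  have e2 : Real.sin (6 * π / 13) = 2 * Real.sin (3 * π / 13) * Real.cos (3 * π / 13) := by
    rw [show (6 : ℝ) * π / 13 = 2 * (3 * π / 13) by ring, Real.sin_two_mul]
  have e3 : Real.sin (2 * π / 13) = 2 * Real.sin (π / 13) * Real.cos (π / 13) := by
    rw [show (2 : ℝ) * π / 13 = 2 * (π / 13) by ring, Real.sin_two_mul]
  have e4 : Real.sin (5 * π / 13) = 2 * Real.sin (4 * π / 13) * Real.cos (4 * π / 13) := by
    rw [show (5 : ℝ) * π / 13 = π - 8 * π / 13 by ring, Real.sin_pi_sub,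
      show (8 : ℝ) * π / 13 = 2 * (4 * π / 13) by ring, Real.sin_two_mul]
  have e5 : Real.sin (3 * π / 13) = 2 * Real.sin (5 * π / 13) * Real.cos (5 * π / 13) := by
    rw [show (3 : ℝ) * π / 13 = π - 10 * π / 13 by ring, Real.sin_pi_sub,
      show (10 : ℝ) * π / 13 = 2 * (5 * π / 13) by ring, Real.sin_two_mul]
  have e6 : Real.sin (π / 13) = 2 * Real.sin (6 * π / 13) * Real.cos (6 * π / 13) := by
    rw [show π / 13 = π - 12 * π / 13 by ring, Real.sin_pi_sub,
      show (12 : ℝ) * π / 13 = 2 * (6 * π / 13) by ring, Real.sin_two_mul]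
  have r1 : Real.sin (4 * π / 13) / Real.sin (2 * π / 13) = 2 * Real.cos (2 * π / 13) := by
    rw [e1]; field_simp
  have r2 : Real.sin (6 * π / 13) / Real.sin (3 * π / 13) = 2 * Real.cos (3 * π / 13) := by
    rw [e2]; field_simp
  have r3 : Real.sin (2 * π / 13) / Real.sin (π / 13) = 2 * Real.cos (π / 13) := by
    rw [e3]; field_simp
  have r4 : Real.sin (5 * π / 13) / Real.sin (4 * π / 13) = 2 * Real.cos (4 * π / 13) := by
    rw [e4]; field_simp
  have r5 : Real.sin (3 * π / 13) / Real.sin (5 * π / 13) = 2 * Real.cos (5 * π / 13) := by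
    rw [e5]; field_simp
  have r6 : Real.sin (π / 13) / Real.sin (6 * π / 13) = 2 * Real.cos (6 * π / 13) := by
    rw [e6]; field_simp
  rw [r1, r2, r3, r4, r5, r6]
  -- telescoping sum
  have k1 := aux_sin2 (π / 13) (π / 13) (2 * π / 13) 0 (by ring) (by ring)
  have k2 := aux_sin2 (π / 13) (2 * π / 13) (3 * π / 13) (π / 13) (by ring) (by ring)
  have k3 := aux_sin2 (π / 13) (3 * π / 13) (4 * π / 13) (2 * π / 13) (by ring) (by ring)
  have k4 := aux_sin2 (π / 13) (4 * π / 13) (5 * π / 13) (3 * π / 13) (by ring) (by ring)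
  have k5 := aux_sin2 (π / 13) (5 * π / 13) (6 * π / 13) (4 * π / 13) (by ring) (by ring)
  have k6 := aux_sin2 (π / 13) (6 * π / 13) (7 * π / 13) (5 * π / 13) (by ring) (by ring)
  have h7 : Real.sin (7 * π / 13) = Real.sin (6 * π / 13) := by
    rw [show (7 : ℝ) * π / 13 = π - 6 * π / 13 by ring, Real.sin_pi_sub]
  have hz : Real.sin (0 : ℝ) = 0 := Real.sin_zero
  have hmul : Real.sin (π / 13) *
      (2 * Real.cos (2 * π / 13) - 2 * Real.cos (3 * π / 13) - 2 * Real.cos (π / 13)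
        + 2 * Real.cos (4 * π / 13) - 2 * Real.cos (5 * π / 13) + 2 * Real.cos (6 * π / 13))
      = Real.sin (π / 13) * (-1) := by
    linear_combination k2 - k3 - k1 + k4 - k5 + k6 + h7 + hz
  have := mul_left_cancel₀ (ne_of_gt h1) hmul
  linarith
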